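/- Let Z be a non-decreasing stochastic process with Z_0 = 0 that is strongly infinitely divisible with respect to time, meaning that for every n ∈ ℕ, Z has the same law (as a process) as the sum of n independent copies of Z time-scaled by 1/n: {Z_t}_{t≥0} =_d {Σ_{i=1}^n Z^{(i)}_{t/n}}_{t≥0}. Let ε_1,...,ε_d be iid unit exponentials independent of Z and X_k = inf{t ≥ 0 : Z_t > ε_k}. Then the survival function F̄(x) = P(X_1 > x_1, ..., X_d > x_d) = E[exp(-Σ_k Z_{x_k})] satisfies the min-stability relation F̄(x)^t = F̄(tx) for all t > 0 of the form t = 1/n and t = n, n ∈ ℕ; in particular each X_k is exponentially distributed. -/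

import Mathlib

open MeasureTheory ProbabilityTheory


lemma my_tail {Ω : Type*} [MeasurableSpace Ω] (P : Measure Ω) [IsProbabilityMeasure P]
    (e : Ω → ℝ) (he : Measurable e)
    (hexp : ∀ s : ℝ, 0 ≤ s → (P {ω | s < e ω}).toReal = Real.exp (-s))
    (s : ℝ) (hs : 0 ≤ s) :
    (P {ω | s ≤ e ω}).toReal = Real.exp (-s) := by
  have hlow : Real.exp (-s) ≤ (P {ω | s ≤ e ω}).toReal := by
    rw [← hexp s hs]
    exact ENNReal.toReal_mono (measure_ne_top _ _)
      (measure_mono fun ω (h : s < e ω) => le_of_lt h)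
  refine le_antisymm ?_ hlow
  rcases eq_or_lt_of_le hs with h0 | hpos
  · have h1 : (P {ω | s ≤ e ω}).toReal ≤ (P Set.univ).toReal :=
      ENNReal.toReal_mono (measure_ne_top _ _) (measure_mono (Set.subset_univ _))
    simpa [← h0] using h1
  · set u : ℕ → ℝ := fun n => Real.exp (-(s - min s (1 / (n + 1)))) with hu
    have hmin : Filter.Tendsto (fun n : ℕ => min s (1 / (n + 1))) Filter.atTop (nhds 0) := by
      have := tendsto_one_div_add_atTop_nhds_zero_nat (𝕜 := ℝ)
      have h := Filter.Tendsto.min (tendsto_const_nhds (x := s)) this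
      simpa [min_eq_right hs] using h
    have hut : Filter.Tendsto u Filter.atTop (nhds (Real.exp (-s))) := by
      have : Filter.Tendsto (fun n : ℕ => -(s - min s (1 / (n + 1)))) Filter.atTop (nhds (-s)) := by
        have := Filter.Tendsto.sub (tendsto_const_nhds (x := s)) hmin
        simpa using this.neg
      exact (Real.continuous_exp.continuousAt.tendsto.comp this)
    refine ge_of_tendsto' hut fun n => ?_
    have hδpos : 0 < min s (1 / (n + 1)) := lt_min hpos (by positivity)
    have hδle : min s (1 / (n + 1)) ≤ s := min_le_left _ _
    have hsub : {ω | s ≤ e ω} ⊆ {ω | s - min s (1 / (n + 1)) < e ω} :=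
      fun ω (h : s ≤ e ω) => lt_of_lt_of_le (by linarith) h
    calc (P {ω | s ≤ e ω}).toReal
        ≤ (P {ω | s - min s (1 / (n + 1)) < e ω}).toReal :=
          ENNReal.toReal_mono (measure_ne_top _ _) (measure_mono hsub)
      _ = u n := hexp _ (by linarith)

lemma my_vec_tail {Ω : Type*} [MeasurableSpace Ω] (P : Measure Ω) [IsProbabilityMeasure P]
    {d : ℕ} (ε : Fin d → Ω → ℝ) (hε : ∀ k, Measurable (ε k))
    (hεexp : ∀ k, ∀ s : ℝ, 0 ≤ s → (P {ω | s < ε k ω}).toReal = Real.exp (-s))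
    (hεindep : iIndepFun ε P)
    (s : Fin d → ℝ) (hs : ∀ k, 0 ≤ s k) :
    P {ω | ∀ k, s k ≤ ε k ω} = ENNReal.ofReal (Real.exp (-∑ k, s k)) := by
  have hone : ∀ k, P (ε k ⁻¹' Set.Ici (s k)) = ENNReal.ofReal (Real.exp (-s k)) := by
    intro k
    have ht : (P (ε k ⁻¹' Set.Ici (s k))).toReal = Real.exp (-s k) := by
      have := my_tail P (ε k) (hε k) (hεexp k) (s k) (hs k)
      simpa [Set.preimage, Set.Ici] using this
    rw [← ht, ENNReal.ofReal_toReal (measure_ne_top _ _)]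
  have hset : {ω | ∀ k, s k ≤ ε k ω} = ⋂ k, ε k ⁻¹' Set.Ici (s k) := by
    ext ω; simp [Set.mem_iInter, Set.mem_preimage]
  rw [hset, hεindep.meas_iInter fun k => ⟨Set.Ici (s k), measurableSet_Ici, rfl⟩]
  simp_rw [hone]
  rw [← ENNReal.ofReal_prod_of_nonneg fun k _ => (Real.exp_pos _).le]
  congr 1
  rw [← Real.exp_sum]
  simp [Finset.sum_neg_distrib]
lemma my_survival {Ω : Type*} [MeasurableSpace Ω] (P : Measure Ω) [IsProbabilityMeasure P]
    {d : ℕ} (Z : ℝ → Ω → ℝ) (hZmeas : ∀ t, Measurable (Z t))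
    (ε : Fin d → Ω → ℝ) (hε : ∀ k, Measurable (ε k))
    (hεexp : ∀ k, ∀ s : ℝ, 0 ≤ s → (P {ω | s < ε k ω}).toReal = Real.exp (-s))
    (hεindep : iIndepFun ε P)
    (hεZ : IndepFun (fun ω (k : Fin d) => ε k ω) (fun ω (t : ℝ) => Z t ω) P)
    (x : Fin d → ℝ) (hx : ∀ k ω, 0 ≤ Z (x k) ω) :
    (P {ω | ∀ k, Z (x k) ω ≤ ε k ω}).toReal
      = ∫ ω, Real.exp (-(∑ k, Z (x k) ω)) ∂P := by
  set V : Ω → (Fin d → ℝ) := fun ω k => Z (x k) ω with hVdef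
  set E : Ω → (Fin d → ℝ) := fun ω k => ε k ω with hEdef
  have hV : Measurable V := measurable_pi_lambda _ fun k => hZmeas (x k)
  have hE : Measurable E := measurable_pi_lambda _ fun k => hε k
  have hVE : IndepFun V E P := by
    have hφ : Measurable (fun f : ℝ → ℝ => fun k : Fin d => f (x k)) :=
      measurable_pi_lambda _ fun k => measurable_pi_apply (x k)
    exact (hεZ.symm.comp hφ measurable_id :)
  have hmap : P.map (fun ω => (V ω, E ω)) = (P.map V).prod (P.map E) :=
    (indepFun_iff_map_prod_eq_prod_map_map hV.aemeasurable hE.aemeasurable).mp hVE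
  set S : Set ((Fin d → ℝ) × (Fin d → ℝ)) := {p | ∀ k, p.1 k ≤ p.2 k} with hSdef
  have hS : MeasurableSet S := by
    have : S = ⋂ k, {p : (Fin d → ℝ) × (Fin d → ℝ) | p.1 k ≤ p.2 k} := by
      ext p; simp [hSdef]
    rw [this]
    exact MeasurableSet.iInter fun k =>
      measurableSet_le (measurable_fst.eval) (measurable_snd.eval)
  have hpre : (fun ω => (V ω, E ω)) ⁻¹' S = {ω | ∀ k, Z (x k) ω ≤ ε k ω} := rfl
  have h1 : P {ω | ∀ k, Z (x k) ω ≤ ε k ω} = ((P.map V).prod (P.map E)) S := by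
    rw [← hmap, Measure.map_apply (hV.prodMk hE) hS, hpre]
  have h2 : ((P.map V).prod (P.map E)) S
      = ∫⁻ b, (P.map E) {a | ∀ k, b k ≤ a k} ∂(P.map V) := by
    rw [Measure.prod_apply hS]
    rfl
  have hfmeas : Measurable fun b => (P.map E) (Prod.mk b ⁻¹' S) :=
    measurable_measure_prodMk_left hS
  have h3 : ∫⁻ b, (P.map E) {a | ∀ k, b k ≤ a k} ∂(P.map V)
      = ∫⁻ ω, (P.map E) {a | ∀ k, Z (x k) ω ≤ a k} ∂P := by
    have := lintegral_map (μ := P) (f := fun b => (P.map E) (Prod.mk b ⁻¹' S)) (g := V)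
      hfmeas hV
    exact this
  have hinner : ∀ ω, (P.map E) {a | ∀ k, Z (x k) ω ≤ a k}
      = ENNReal.ofReal (Real.exp (-(∑ k, Z (x k) ω))) := by
    intro ω
    have hAmeas : MeasurableSet {a : Fin d → ℝ | ∀ k, Z (x k) ω ≤ a k} := by
      have : {a : Fin d → ℝ | ∀ k, Z (x k) ω ≤ a k}
          = ⋂ k, (fun a : Fin d → ℝ => a k) ⁻¹' Set.Ici (Z (x k) ω) := by
        ext a; simp
      rw [this]
      exact MeasurableSet.iInter fun k => (measurable_pi_apply k) measurableSet_Ici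
    rw [Measure.map_apply hE hAmeas]
    have : E ⁻¹' {a | ∀ k, Z (x k) ω ≤ a k} = {ω' | ∀ k, Z (x k) ω ≤ ε k ω'} := rfl
    rw [this, my_vec_tail P ε hε hεexp hεindep _ (fun k => hx k ω)]
  have h4 : ∫⁻ ω, (P.map E) {a | ∀ k, Z (x k) ω ≤ a k} ∂P
      = ∫⁻ ω, ENNReal.ofReal (Real.exp (-(∑ k, Z (x k) ω))) ∂P :=
    lintegral_congr fun ω => hinner ω
  have hmeas_sum : Measurable fun ω => Real.exp (-(∑ k, Z (x k) ω)) :=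
    Real.measurable_exp.comp (Finset.measurable_sum Finset.univ fun k _ => hZmeas (x k)).neg
  have h5 : ∫ ω, Real.exp (-(∑ k, Z (x k) ω)) ∂P
      = (∫⁻ ω, ENNReal.ofReal (Real.exp (-(∑ k, Z (x k) ω))) ∂P).toReal := by
    rw [integral_eq_lintegral_of_nonneg_ae
      (Filter.Eventually.of_forall fun ω => (Real.exp_pos _).le)
      hmeas_sum.aestronglyMeasurable]
  rw [h1, h2, h3, h4, h5]
lemma my_pi_pow {Ω : Type*} [MeasurableSpace Ω] (P : Measure Ω) [IsProbabilityMeasure P]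
    (n : ℕ) (f : Ω → ℝ) :
    ∫ ωs : Fin n → Ω, ∏ i, f (ωs i) ∂(Measure.pi fun _ => P) = (∫ ω, f ω ∂P) ^ n := by
  letI : MeasureSpace Ω := ⟨P⟩
  have h : (Measure.pi fun _ : Fin n => P) = (volume : Measure (Fin n → Ω)) := rfl
  rw [h]
  simpa [← h] using MeasureTheory.integral_fintype_prod_eq_pow (ι := Fin n) f (μ := P)

lemma my_idt_pow {Ω : Type*} [MeasurableSpace Ω] (P : Measure Ω) [IsProbabilityMeasure P]
    (Z : ℝ → Ω → ℝ) (hZmeas : ∀ t, Measurable (Z t))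
    (hIDT : ∀ n : ℕ, 0 < n → ∀ (m : ℕ) (t : Fin m → ℝ),
      P.map (fun ω (j : Fin m) => Z (t j) ω)
        = (Measure.pi fun _ : Fin n => P).map
            (fun ωs (j : Fin m) => ∑ i : Fin n, Z (t j / n) (ωs i)))
    (n : ℕ) (hn : 0 < n) {d : ℕ} (x : Fin d → ℝ) :
    ∫ ω, Real.exp (-(∑ j, Z ((n : ℝ) * x j) ω)) ∂P
      = (∫ ω, Real.exp (-(∑ j, Z (x j) ω)) ∂P) ^ n := by
  have hne : (n : ℝ) ≠ 0 := Nat.cast_ne_zero.mpr hn.ne'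
  have h := hIDT n hn d (fun j => (n : ℝ) * x j)
  simp only [mul_div_cancel_left₀ _ hne] at h
  set f : (Fin d → ℝ) → ℝ := fun v => Real.exp (-(∑ j, v j)) with hfdef
  have hf : Measurable f :=
    Real.measurable_exp.comp (Finset.measurable_sum Finset.univ fun j _ =>
      measurable_pi_apply j).neg
  have hg1 : Measurable fun ω (j : Fin d) => Z ((n : ℝ) * x j) ω :=
    measurable_pi_lambda _ fun j => hZmeas _
  have hg2 : Measurable fun (ωs : Fin n → Ω) (j : Fin d) => ∑ i : Fin n, Z (x j) (ωs i) :=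
    measurable_pi_lambda _ fun j =>
      Finset.measurable_sum Finset.univ fun i _ => (hZmeas (x j)).comp (measurable_pi_apply i)
  have hL : ∫ ω, Real.exp (-(∑ j, Z ((n : ℝ) * x j) ω)) ∂P
      = ∫ v, f v ∂(P.map (fun ω (j : Fin d) => Z ((n : ℝ) * x j) ω)) := by
    rw [integral_map hg1.aemeasurable hf.aestronglyMeasurable]
  rw [hL, h, integral_map hg2.aemeasurable hf.aestronglyMeasurable]
  have hpt : ∀ ωs : Fin n → Ω,
      f (fun j => ∑ i : Fin n, Z (x j) (ωs i))
        = ∏ i : Fin n, Real.exp (-(∑ j, Z (x j) (ωs i))) := by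
    intro ωs
    rw [hfdef]
    simp only
    rw [Finset.sum_comm, ← Real.exp_sum]
    congr 1
    simp [Finset.sum_neg_distrib]
  simp_rw [hpt]
  exact my_pi_pow P n fun ω => Real.exp (-(∑ j, Z (x j) ω))

/-- Let `Z` be a non-decreasing right-continuous process with `Z_0 = 0` that is strongly
infinitely divisible with respect to time: for every `n`, `Z` has the same finite-dimensional
distributions as the sum of `n` independent copies of `Z` time-scaled by `1/n`.  With
`ε_1, …, ε_d` iid unit exponentials independent of `Z` and first-passage times
`X_k = inf {t ≥ 0 | Z_t > ε_k}` (the event `{X_k > s}` is encoded as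
`{∀ t ∈ [0,s], Z_t ≤ ε_k}`), the survival function
`F̄(x) = P(X_1 > x_1, …, X_d > x_d) = E[exp(-∑_k Z_{x_k})]` satisfies the min-stability
relation `F̄(x)^t = F̄(t x)` for all `t = n` and `t = 1/n`, `n ∈ ℕ`; in particular each `X_k`
is exponentially distributed. -/
theorem strongIDT_min_stable {Ω : Type*} [MeasurableSpace Ω]
    (P : Measure Ω) [IsProbabilityMeasure P] {d : ℕ}
    (Z : ℝ → Ω → ℝ) (hZmeas : ∀ t, Measurable (Z t))
    (hZ0 : ∀ ω, Z 0 ω = 0) (hZmono : ∀ ω, Monotone (fun t => Z t ω))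
    (hZrc : ∀ ω t, ContinuousWithinAt (fun s => Z s ω) (Set.Ici t) t)
    (hIDT : ∀ n : ℕ, 0 < n → ∀ (m : ℕ) (t : Fin m → ℝ),
      P.map (fun ω (j : Fin m) => Z (t j) ω)
        = (Measure.pi fun _ : Fin n => P).map
            (fun ωs (j : Fin m) => ∑ i : Fin n, Z (t j / n) (ωs i)))
    (ε : Fin d → Ω → ℝ) (hε : ∀ k, Measurable (ε k))
    (hεexp : ∀ k, ∀ s : ℝ, 0 ≤ s → (P {ω | s < ε k ω}).toReal = Real.exp (-s))
    (hεindep : iIndepFun ε P)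
    (hεZ : IndepFun (fun ω (k : Fin d) => ε k ω) (fun ω (t : ℝ) => Z t ω) P) :
    (∀ x : Fin d → ℝ, (∀ k, 0 ≤ x k) →
      (P {ω | ∀ k, ∀ t : ℝ, 0 ≤ t → t ≤ x k → Z t ω ≤ ε k ω}).toReal
        = ∫ ω, Real.exp (-(∑ k, Z (x k) ω)) ∂P) ∧
    (∀ n : ℕ, 0 < n → ∀ x : Fin d → ℝ, (∀ k, 0 ≤ x k) →
      ((P {ω | ∀ k, ∀ t : ℝ, 0 ≤ t → t ≤ x k → Z t ω ≤ ε k ω}).toReal) ^ n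
          = (P {ω | ∀ k, ∀ t : ℝ, 0 ≤ t → t ≤ (n : ℝ) * x k → Z t ω ≤ ε k ω}).toReal ∧
      ((P {ω | ∀ k, ∀ t : ℝ, 0 ≤ t → t ≤ x k → Z t ω ≤ ε k ω}).toReal) ^ ((n : ℝ)⁻¹)
          = (P {ω | ∀ k, ∀ t : ℝ, 0 ≤ t → t ≤ x k / (n : ℝ) → Z t ω ≤ ε k ω}).toReal) ∧
    (∃ lam : ℝ, 0 ≤ lam ∧ ∀ k : Fin d, ∀ s : ℝ, 0 ≤ s →
      (P {ω | ∀ t : ℝ, 0 ≤ t → t ≤ s → Z t ω ≤ ε k ω}).toReal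
        = Real.exp (-(lam * s))) := by
  have hZpos : ∀ t : ℝ, 0 ≤ t → ∀ ω, 0 ≤ Z t ω := fun t ht ω => by
    have := hZmono ω ht
    simpa [hZ0 ω] using this
  have hset : ∀ (x : Fin d → ℝ), (∀ k, 0 ≤ x k) →
      {ω | ∀ k, ∀ t : ℝ, 0 ≤ t → t ≤ x k → Z t ω ≤ ε k ω}
        = {ω | ∀ k, Z (x k) ω ≤ ε k ω} := by
    intro x hx; ext ω
    constructor
    · intro h k; exact h k (x k) (hx k) le_rfl
    · intro h k t _ htx; exact le_trans (hZmono ω htx) (h k)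
  have hF : ∀ x : Fin d → ℝ, (∀ k, 0 ≤ x k) →
      (P {ω | ∀ k, ∀ t : ℝ, 0 ≤ t → t ≤ x k → Z t ω ≤ ε k ω}).toReal
        = ∫ ω, Real.exp (-(∑ k, Z (x k) ω)) ∂P := by
    intro x hx; rw [hset x hx]
    exact my_survival P Z hZmeas ε hε hεexp hεindep hεZ x fun k ω => hZpos _ (hx k) ω
  have hstab : ∀ n : ℕ, 0 < n → ∀ x : Fin d → ℝ, (∀ k, 0 ≤ x k) →
      ((P {ω | ∀ k, ∀ t : ℝ, 0 ≤ t → t ≤ x k → Z t ω ≤ ε k ω}).toReal) ^ n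
        = (P {ω | ∀ k, ∀ t : ℝ, 0 ≤ t → t ≤ (n : ℝ) * x k → Z t ω ≤ ε k ω}).toReal := by
    intro n hn x hx
    have hxn : ∀ k, 0 ≤ (n : ℝ) * x k := fun k => mul_nonneg (Nat.cast_nonneg n) (hx k)
    rw [hF x hx, hF _ hxn, my_idt_pow P Z hZmeas hIDT n hn x]
  refine ⟨hF, ?_, ?_⟩
  · intro n hn x hx
    refine ⟨hstab n hn x hx, ?_⟩
    have hne : (n : ℝ) ≠ 0 := Nat.cast_ne_zero.mpr hn.ne'
    have hy : ∀ k, 0 ≤ x k / (n : ℝ) := fun k => div_nonneg (hx k) (Nat.cast_nonneg n)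
    have hkey := hstab n hn (fun k => x k / (n : ℝ)) hy
    have harg : ∀ k, (n : ℝ) * (x k / (n : ℝ)) = x k := fun k => by field_simp
    simp only [harg] at hkey
    rw [← hkey, Real.pow_rpow_inv_natCast ENNReal.toReal_nonneg hn.ne']
  · -- part 3
    set g : ℝ → ℝ := fun s => ∫ ω, Real.exp (-(Z s ω)) ∂P with hgdef
    have hInt : ∀ s : ℝ, 0 ≤ s → Integrable (fun ω => Real.exp (-(Z s ω))) P := by
      intro s hs
      refine Integrable.mono' (integrable_const 1)
        ((Real.measurable_exp.comp (hZmeas s).neg).aestronglyMeasurable)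
        (Filter.Eventually.of_forall fun ω => ?_)
      rw [Real.norm_eq_abs, abs_of_nonneg (Real.exp_pos _).le]
      exact Real.exp_le_one_iff.2 (neg_nonpos.2 (hZpos s hs ω))
    have h_anti : ∀ s u : ℝ, 0 ≤ s → s ≤ u → g u ≤ g s := fun s u hs hsu =>
      integral_mono (hInt u (hs.trans hsu)) (hInt s hs) fun ω =>
        Real.exp_le_exp.2 (neg_le_neg (hZmono ω hsu))
    have hg0 : g 0 = 1 := by
      rw [hgdef]
      simp [hZ0]
    have hgnonneg : ∀ s : ℝ, 0 ≤ g s := fun s =>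
      integral_nonneg fun ω => (Real.exp_pos _).le
    have hgmul : ∀ m : ℕ, 0 < m → ∀ s : ℝ, g ((m : ℝ) * s) = g s ^ m := by
      intro m hm s
      have h := my_idt_pow P Z hZmeas hIDT m hm (d := 1) (fun _ => s)
      simpa [Fin.sum_univ_one, hgdef] using h
    set c : ℝ := g 1 with hcdef
    have hcpos : 0 < c := by
      rw [hcdef, hgdef]
      refine (integral_pos_iff_support_of_nonneg (fun ω => (Real.exp_pos _).le)
        (hInt 1 zero_le_one)).2 ?_
      have hsupp : Function.support (fun ω => Real.exp (-(Z 1 ω))) = Set.univ :=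
        Set.eq_univ_of_forall fun ω => (Real.exp_pos _).ne'
      rw [hsupp, measure_univ]
      exact one_pos
    have hcle1 : c ≤ 1 := by
      have := h_anti 0 1 le_rfl zero_le_one
      rw [hg0] at this
      exact this
    -- g at rationals
    have hgnat : ∀ m : ℕ, g (m : ℝ) = c ^ m := by
      intro m
      rcases Nat.eq_zero_or_pos m with h0 | hm
      · subst h0; simpa using hg0
      · have := hgmul m hm 1
        simpa using this
    have hgrat : ∀ p mm : ℕ, 0 < mm →
        g ((p : ℝ) / (mm : ℝ)) = Real.exp (((p : ℝ) / (mm : ℝ)) * Real.log c) := by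
      intro p mm hmm
      have hmne : (mm : ℝ) ≠ 0 := Nat.cast_ne_zero.mpr hmm.ne'
      have ha : 0 ≤ g ((p : ℝ) / (mm : ℝ)) := hgnonneg _
      have hb : 0 ≤ Real.exp (((p : ℝ) / (mm : ℝ)) * Real.log c) := (Real.exp_pos _).le
      have hapow : g ((p : ℝ) / (mm : ℝ)) ^ mm = c ^ p := by
        have h1 := hgmul mm hmm ((p : ℝ) / (mm : ℝ))
        have h2 : (mm : ℝ) * ((p : ℝ) / (mm : ℝ)) = (p : ℝ) := by field_simp
        rw [h2] at h1
        rw [← h1, hgnat p]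
      have hbpow : Real.exp (((p : ℝ) / (mm : ℝ)) * Real.log c) ^ mm = c ^ p := by
        rw [← Real.exp_nat_mul]
        have h3 : (mm : ℝ) * (((p : ℝ) / (mm : ℝ)) * Real.log c) = (p : ℝ) * Real.log c := by
          field_simp
        rw [h3, Real.exp_nat_mul, Real.exp_log hcpos]
      calc g ((p : ℝ) / (mm : ℝ))
          = (g ((p : ℝ) / (mm : ℝ)) ^ mm) ^ ((mm : ℝ)⁻¹) :=
            (Real.pow_rpow_inv_natCast ha hmm.ne').symm
        _ = (Real.exp (((p : ℝ) / (mm : ℝ)) * Real.log c) ^ mm) ^ ((mm : ℝ)⁻¹) := by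
            rw [hapow, hbpow]
        _ = Real.exp (((p : ℝ) / (mm : ℝ)) * Real.log c) :=
            Real.pow_rpow_inv_natCast hb hmm.ne'
    have hgq : ∀ r : ℚ, 0 ≤ r → g (r : ℝ) = Real.exp ((r : ℝ) * Real.log c) := by
      intro r hr
      have hcast : (r : ℝ) = ((r.num.toNat : ℕ) : ℝ) / ((r.den : ℕ) : ℝ) := by
        rw [Rat.cast_def]
        congr 1
        exact_mod_cast (Int.toNat_of_nonneg (Rat.num_nonneg.2 hr)).symm
      rw [hcast]
      exact hgrat _ _ r.pos
    -- continuity squeeze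
    have hseq : Filter.Tendsto (fun m : ℕ => (1 : ℝ) / (m + 1)) Filter.atTop (nhds 0) :=
      tendsto_one_div_add_atTop_nhds_zero_nat
    have hkey : ∀ s : ℝ, 0 ≤ s → g s = Real.exp (s * Real.log c) := by
      intro s hs
      have hcontc : Continuous fun u : ℝ => Real.exp (u * Real.log c) :=
        Real.continuous_exp.comp (continuous_id.mul continuous_const)
      -- upper bound: h s ≤ g s via rationals above s
      have hub : Real.exp (s * Real.log c) ≤ g s := by
        have hlt : ∀ m : ℕ, s < s + 1 / (m + 1) := fun m => by
          have : (0:ℝ) < 1 / (m + 1) := by positivity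
          linarith
        choose q hq1 hq2 using fun m : ℕ => exists_rat_btwn (hlt m)
        have hqr : ∀ m, (0:ℚ) ≤ q m := fun m => by
          have : (0:ℝ) < q m := lt_of_le_of_lt hs (hq1 m)
          exact_mod_cast this.le
        have htq : Filter.Tendsto (fun m => ((q m : ℝ))) Filter.atTop (nhds s) := by
          refine tendsto_of_tendsto_of_tendsto_of_le_of_le (g := fun _ : ℕ => s)
            (h := fun m : ℕ => s + 1 / (m + 1)) tendsto_const_nhds ?_
            (fun m => (hq1 m).le) (fun m => (hq2 m).le)
          simpa using (tendsto_const_nhds (x := s)).add hseq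
        have hlim : Filter.Tendsto (fun m => Real.exp ((q m : ℝ) * Real.log c))
            Filter.atTop (nhds (Real.exp (s * Real.log c))) :=
          (hcontc.continuousAt.tendsto.comp htq)
        refine le_of_tendsto' hlim fun m => ?_
        rw [← hgq (q m) (hqr m)]
        exact h_anti s (q m) hs (hq1 m).le
      have hlb : g s ≤ Real.exp (s * Real.log c) := by
        rcases eq_or_lt_of_le hs with h0 | hpos
        · rw [← h0, hg0]; simp
        · have hlt : ∀ m : ℕ, max 0 (s - 1 / (m + 1)) < s := fun m => by
            refine max_lt hpos ?_
            have : (0:ℝ) < 1 / (m + 1) := by positivity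
            linarith
          choose q hq1 hq2 using fun m : ℕ => exists_rat_btwn (hlt m)
          have hqr : ∀ m, (0:ℚ) ≤ q m := fun m => by
            have : (0:ℝ) ≤ q m := le_of_lt (lt_of_le_of_lt (le_max_left _ _) (hq1 m))
            exact_mod_cast this
          have htq : Filter.Tendsto (fun m => ((q m : ℝ))) Filter.atTop (nhds s) := by
            refine tendsto_of_tendsto_of_tendsto_of_le_of_le
              (g := fun m : ℕ => s - 1 / (m + 1)) (h := fun _ : ℕ => s) ?_
              tendsto_const_nhds
              (fun m => le_of_lt (lt_of_le_of_lt (le_max_right _ _) (hq1 m)))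
              (fun m => (hq2 m).le)
            simpa using (tendsto_const_nhds (x := s)).sub hseq
          have hlim : Filter.Tendsto (fun m => Real.exp ((q m : ℝ) * Real.log c))
              Filter.atTop (nhds (Real.exp (s * Real.log c))) :=
            (hcontc.continuousAt.tendsto.comp htq)
          refine ge_of_tendsto' hlim fun m => ?_
          rw [← hgq (q m) (hqr m)]
          exact h_anti (q m) s (by exact_mod_cast hqr m) (hq2 m).le
      exact le_antisymm hlb hub
    -- single-coordinate survival probability
    have hsingle : ∀ (k : Fin d) (s : ℝ), 0 ≤ s →
        (P {ω | ∀ t : ℝ, 0 ≤ t → t ≤ s → Z t ω ≤ ε k ω}).toReal = g s := by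
      intro k s hs
      have hset1 : {ω | ∀ t : ℝ, 0 ≤ t → t ≤ s → Z t ω ≤ ε k ω}
          = {ω | Z s ω ≤ ε k ω} := by
        ext ω; constructor
        · intro h; exact h s hs le_rfl
        · intro h t _ hts; exact le_trans (hZmono ω hts) h
      set x : Fin d → ℝ := fun j => if j = k then s else 0 with hxdef
      have hx : ∀ j, 0 ≤ x j := fun j => by
        rw [hxdef]; dsimp only; split <;> simp [hs]
      have hsum : ∀ ω, ∑ j, Z (x j) ω = Z s ω := by
        intro ω
        have h1 : ∀ j, Z (x j) ω = if j = k then Z s ω else 0 := by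
          intro j; rw [hxdef]; dsimp only; split <;> simp [hZ0]
        rw [Finset.sum_congr rfl fun j _ => h1 j]
        simp
      -- null set where some ε is negative
      have hnull : ∀ j : Fin d, P {ω | ε j ω < 0} = 0 := by
        intro j
        have h1 : P {ω | (0:ℝ) < ε j ω} = 1 := by
          have ht := hεexp j 0 le_rfl
          rw [← ENNReal.ofReal_toReal (measure_ne_top P _), ht]
          simp
        have hms : MeasurableSet {ω | (0:ℝ) < ε j ω} := measurableSet_lt measurable_const (hε j)
        have h2 : P ({ω | (0:ℝ) < ε j ω}ᶜ) = 0 := by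
          rw [measure_compl hms (measure_ne_top P _), h1, measure_univ, tsub_self]
        refine measure_mono_null ?_ h2
        intro ω (hω : ε j ω < 0)
        exact fun (h : (0:ℝ) < ε j ω) => absurd hω (not_lt.2 h.le)
      have hAB : P {ω | ∀ j, Z (x j) ω ≤ ε j ω} = P {ω | Z s ω ≤ ε k ω} := by
        refine measure_congr ?_
        rw [MeasureTheory.ae_eq_set]
        constructor
        · refine measure_mono_null ?_ (measure_empty (μ := P))
          intro ω hω
          rcases hω with ⟨hA, hB⟩
          exfalso
          apply hB
          have := hA k
          rw [hxdef] at this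
          simpa using this
        · refine measure_mono_null ?_
            (measure_iUnion_null fun j => hnull j)
          intro ω hω
          rcases hω with ⟨hB, hA⟩
          simp only [Set.mem_setOf_eq, not_forall] at hA
          obtain ⟨j, hj⟩ := hA
          by_cases hjk : j = k
          · subst hjk
            exfalso; apply hj
            rw [hxdef]; simpa using hB
          · refine Set.mem_iUnion.2 ⟨j, ?_⟩
            have : Z (x j) ω = 0 := by rw [hxdef]; simp [hjk, hZ0]
            show ε j ω < 0
            rw [← this]
            exact lt_of_not_ge hj
      have hsurv := my_survival P Z hZmeas ε hε hεexp hεindep hεZ x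
        (fun j ω => hZpos _ (hx j) ω)
      rw [hset1, ← hAB, hsurv]
      rw [hgdef]
      refine integral_congr_ae (Filter.Eventually.of_forall fun ω => ?_)
      show Real.exp (-∑ j, Z (x j) ω) = Real.exp (-Z s ω)
      rw [hsum ω]
    refine ⟨-Real.log c, neg_nonneg.2 (Real.log_nonpos hcpos.le hcle1), ?_⟩
    intro k s hs
    rw [hsingle k s hs, hkey s hs]
    congr 1
    ring
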